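/- Let k be a field and R a commutative integral domain that is a graded k-algebra with grading 𝒜 : ℕ → Submodule k R, 𝒜 0 = k·1. If R is a Hilbert–Serre ring, then the transcendence degree of R over k is at most the Hilbert–Serre dimension: Algebra.trdeg k R ≤ d(R). -/

import Mathlib

/-- The boundedness condition defining Hilbert–Serre rings: for all `t ∈ (0,1)` the
Poincaré series `∑ F n * tⁿ` converges and `(1 - t) ^ d` times its sum is bounded by a
uniform constant `C > 0`. -/
def HSBound (F : ℕ → ℕ) (d : ℕ) : Prop :=
  ∃ C : ℝ, 0 < C ∧ ∀ t : ℝ, t ∈ Set.Ioo (0 : ℝ) 1 →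
    Summable (fun n => (F n : ℝ) * t ^ n) ∧
      (1 - t) ^ d * (∑' n, (F n : ℝ) * t ^ n) ≤ C

/-- A graded algebra with grading `𝒜` is a *Hilbert–Serre ring* if every graded component
is finite dimensional over `k` and the Poincaré series `∑ dim_k (𝒜 n) tⁿ` satisfies the
boundedness condition `HSBound` for some `d`. -/
def IsHilbertSerre {k R : Type*} [Field k] [CommRing R] [Algebra k R]
    (𝒜 : ℕ → Submodule k R) : Prop :=
  (∀ n, FiniteDimensional k (𝒜 n)) ∧
    ∃ d, HSBound (fun n => Module.finrank k (𝒜 n)) d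

/-- The Hilbert–Serre dimension `d(R)`: the least `d` such that `(1-t)^d P_R(t)` is
bounded on `(0,1)`. -/
noncomputable def hsDim {k R : Type*} [Field k] [CommRing R] [Algebra k R]
    (𝒜 : ℕ → Submodule k R) : ℕ :=
  sInf {d | HSBound (fun n => Module.finrank k (𝒜 n)) d}


/-- The transcendence degree of a commutative `k`-algebra `R`: the supremum of the
cardinalities of subsets of `R` that are algebraically independent over `k`. -/
noncomputable def trdeg (k : Type*) (R : Type*) [CommRing k] [CommRing R] [Algebra k R] :
    Cardinal :=
  ⨆ s : {s : Set R // AlgebraicIndependent k ((↑) : s → R)}, Cardinal.mk s.1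


open Module

section Aux

section
variable {k R : Type*} [Field k] [CommRing R] [Algebra k R]
variable (𝒜 : ℕ → Submodule k R) [GradedAlgebra 𝒜]

noncomputable def SN (N : ℕ) : Submodule k R := ⨆ i, ⨆ (_ : i ≤ N), 𝒜 i

lemma le_SN {i N : ℕ} (h : i ≤ N) : 𝒜 i ≤ SN 𝒜 N := by
  refine le_trans ?_ (le_iSup _ i)
  exact le_iSup (fun _ : i ≤ N => 𝒜 i) h

lemma SN_mono {p q : ℕ} (h : p ≤ q) : SN 𝒜 p ≤ SN 𝒜 q :=
  iSup₂_le fun i hi => le_SN 𝒜 (hi.trans h)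

lemma SN_mul_le (p q : ℕ) : SN 𝒜 p * SN 𝒜 q ≤ SN 𝒜 (p + q) := by
  rw [SN, Submodule.iSup_mul]
  refine iSup_le fun i => ?_
  rw [Submodule.iSup_mul]
  refine iSup_le fun hi => ?_
  rw [SN, Submodule.mul_iSup]
  refine iSup_le fun j => ?_
  rw [Submodule.mul_iSup]
  refine iSup_le fun hj => ?_
  refine le_trans ?_ (le_SN 𝒜 (add_le_add hi hj))
  exact Submodule.mul_le.2 fun a ha b hb => SetLike.mul_mem_graded ha hb

lemma mul_mem_SN {p q : ℕ} {a b : R} (ha : a ∈ SN 𝒜 p) (hb : b ∈ SN 𝒜 q) :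
    a * b ∈ SN 𝒜 (p + q) := SN_mul_le 𝒜 p q (Submodule.mul_mem_mul ha hb)

lemma one_mem_SN : (1 : R) ∈ SN 𝒜 0 := le_SN 𝒜 (le_refl 0) (SetLike.one_mem_graded 𝒜)

lemma pow_mem_SN {M : ℕ} {a : R} (ha : a ∈ SN 𝒜 M) (e : ℕ) : a ^ e ∈ SN 𝒜 (M * e) := by
  induction e with
  | zero => simpa using one_mem_SN 𝒜
  | succ n ih =>
    rw [pow_succ, Nat.mul_succ]
    exact mul_mem_SN 𝒜 ih ha

lemma prod_mem_SN {ι : Type*} (s : Finset ι) (g : ι → R) (n : ι → ℕ)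
    (h : ∀ i ∈ s, g i ∈ SN 𝒜 (n i)) : (∏ i ∈ s, g i) ∈ SN 𝒜 (∑ i ∈ s, n i) := by
  classical
  induction s using Finset.induction with
  | empty => simpa using one_mem_SN 𝒜
  | insert _ _ hi ih =>
    rw [Finset.prod_insert hi, Finset.sum_insert hi]
    exact mul_mem_SN 𝒜 (h _ (Finset.mem_insert_self _ _))
      (ih fun i his => h i (Finset.mem_insert_of_mem his))

lemma SN_zero : SN 𝒜 0 = 𝒜 0 :=
  le_antisymm (iSup₂_le fun i hi => by rw [Nat.le_zero.mp hi]) (le_SN 𝒜 le_rfl)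

lemma SN_succ (N : ℕ) : SN 𝒜 (N + 1) = SN 𝒜 N ⊔ 𝒜 (N + 1) := by
  refine le_antisymm (iSup₂_le fun i hi => ?_) (sup_le (SN_mono 𝒜 (Nat.le_succ N)) (le_SN 𝒜 le_rfl))
  rcases Nat.lt_succ_iff_lt_or_eq.mp (Nat.lt_succ_of_le hi) with h | h
  · exact le_trans (le_SN 𝒜 (Nat.lt_succ_iff.mp h)) le_sup_left
  · rw [h]; exact le_sup_right

lemma fd_SN (hF : ∀ n, FiniteDimensional k (𝒜 n)) (N : ℕ) :
    FiniteDimensional k (SN 𝒜 N) := by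
  induction N with
  | zero => rw [SN_zero]; exact hF 0
  | succ N ih =>
    rw [SN_succ]
    have := hF (N + 1)
    exact Submodule.finiteDimensional_sup _ _

lemma finrank_SN_le (hF : ∀ n, FiniteDimensional k (𝒜 n)) (N : ℕ) :
    finrank k (SN 𝒜 N) ≤ ∑ n ∈ Finset.range (N + 1), finrank k (𝒜 n) := by
  induction N with
  | zero => rw [SN_zero]; simp
  | succ N ih =>
    rw [SN_succ, Finset.sum_range_succ]
    have h1 := fd_SN 𝒜 hF N
    have h2 := hF (N + 1)
    have := Submodule.finrank_sup_add_finrank_inf_eq (SN 𝒜 N) (𝒜 (N + 1))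
    omega

end

section
variable {k R : Type*} [Field k] [CommRing R] [Algebra k R]
variable (𝒜 : ℕ → Submodule k R) [GradedAlgebra 𝒜]

lemma card_le_finrank_SN (hF : ∀ n, FiniteDimensional k (𝒜 n)) {m M D : ℕ}
    {x : Fin m → R} (hx : AlgebraicIndependent k x) (hxM : ∀ i, x i ∈ SN 𝒜 M) :
    (D + 1) ^ m ≤ ∑ n ∈ Finset.range (M * m * D + 1), finrank k (𝒜 n) := by
  classical
  set g : (Fin m → Fin (D + 1)) → (Fin m →₀ ℕ) :=
    fun f => Finsupp.equivFunOnFinite.symm fun i => (f i : ℕ) with hg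
  have hginj : Function.Injective g := by
    intro f1 f2 hf
    funext i
    have := congrArg (fun h => Finsupp.equivFunOnFinite h i) hf
    simpa [hg, Fin.val_injective.eq_iff] using this
  set v : (Fin m →₀ ℕ) → R :=
    fun α => MvPolynomial.aeval x (MvPolynomial.monomial α (1:k)) with hv
  have hinj : Function.Injective (MvPolynomial.aeval x : MvPolynomial (Fin m) k →ₐ[k] R) :=
    algebraicIndependent_iff_injective_aeval.mp hx
  have hliv : LinearIndependent k v := by
    have h1 := (MvPolynomial.basisMonomials (Fin m) k).linearIndependent.map'
      (MvPolynomial.aeval x).toLinearMap (LinearMap.ker_eq_bot.mpr hinj)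
    have : ((MvPolynomial.aeval x).toLinearMap ∘ (MvPolynomial.basisMonomials (Fin m) k)) = v := by
      funext α
      simp only [Function.comp_apply, AlgHom.toLinearMap_apply, MvPolynomial.coe_basisMonomials, hv]
    rwa [this] at h1
  have hliw : LinearIndependent k (v ∘ g) := hliv.comp g hginj
  -- membership
  have hmem : ∀ f : Fin m → Fin (D + 1), v (g f) ∈ SN 𝒜 (M * m * D) := by
    intro f
    have hval : v (g f) = ∏ i : Fin m, x i ^ ((f i : ℕ)) := by
      simp only [hv]
      rw [MvPolynomial.aeval_monomial, map_one, one_mul, Finsupp.prod_fintype]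
      · simp [hg]
      · intro i; exact pow_zero _
    rw [hval]
    have h1 : (∏ i : Fin m, x i ^ ((f i : ℕ))) ∈ SN 𝒜 (∑ i : Fin m, M * (f i : ℕ)) :=
      prod_mem_SN 𝒜 _ _ _ fun i _ => pow_mem_SN 𝒜 (hxM i) _
    refine SN_mono 𝒜 ?_ h1
    calc ∑ i : Fin m, M * (f i : ℕ) ≤ ∑ _i : Fin m, M * D :=
        Finset.sum_le_sum fun i _ => Nat.mul_le_mul_left M (Nat.lt_succ_iff.mp (f i).isLt)
      _ = m * (M * D) := by simp [Finset.sum_const, mul_comm]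
      _ = M * m * D := by ring
  -- into the submodule
  haveI := fd_SN 𝒜 hF (M * m * D)
  set w : (Fin m → Fin (D + 1)) → SN 𝒜 (M * m * D) :=
    fun f => ⟨v (g f), hmem f⟩ with hw
  have hliw' : LinearIndependent k w := by
    apply LinearIndependent.of_comp (SN 𝒜 (M * m * D)).subtype
    exact hliw
  have hcard := hliw'.fintype_card_le_finrank
  have : Fintype.card (Fin m → Fin (D + 1)) = (D + 1) ^ m := by simp
  rw [this] at hcard
  exact hcard.trans (finrank_SN_le 𝒜 hF _)

end

section
variable {k R : Type*} [Field k] [CommRing R] [Algebra k R]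
variable (𝒜 : ℕ → Submodule k R) [GradedAlgebra 𝒜]


set_option maxHeartbeats 1000000 in
lemma not_indep (hF : ∀ n, FiniteDimensional k (𝒜 n)) {d : ℕ}
    (hP : ∃ C : ℝ, 0 < C ∧ ∀ N : ℕ, 1 ≤ N →
      (∑ n ∈ Finset.range (N + 1), ((finrank k (𝒜 n) : ℝ))) ≤ C * (N : ℝ) ^ d)
    (x : Fin (d + 1) → R) : ¬ AlgebraicIndependent k x := by
  intro hx
  classical
  -- find a common filtration bound M ≥ 1
  have htop : ∀ i, ∃ Mi, x i ∈ SN 𝒜 Mi := by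
    intro i
    have hmem : x i ∈ ⨆ n, 𝒜 n := by
      rw [(DirectSum.Decomposition.isInternal 𝒜).submodule_iSup_eq_top]
      trivial
    rw [Submodule.mem_iSup_iff_exists_finset] at hmem
    obtain ⟨s, hs⟩ := hmem
    refine ⟨s.sup id, ?_⟩
    have hle : (⨆ j ∈ s, 𝒜 j) ≤ SN 𝒜 (s.sup id) :=
      iSup₂_le fun j hj => le_SN 𝒜 (Finset.le_sup (f := id) hj)
    exact hle hs
  choose Mi hMi using htop
  set M := (Finset.univ.sup Mi) + 1 with hM
  have hM1 : 1 ≤ M := Nat.le_add_left 1 _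
  have hxM : ∀ i, x i ∈ SN 𝒜 M := fun i =>
    SN_mono 𝒜 ((Finset.le_sup (Finset.mem_univ i)).trans (Nat.le_succ _)) (hMi i)
  obtain ⟨C, hC, hPS⟩ := hP
  -- choose D large
  obtain ⟨D0, hD0⟩ := exists_nat_gt (C * ((M * (d + 1) : ℕ) : ℝ) ^ d)
  set D := max 1 D0 with hD
  have hD1 : 1 ≤ D := le_max_left _ _
  have hDD0 : (D0 : ℝ) ≤ D := by exact_mod_cast le_max_right 1 D0
  have hcard := card_le_finrank_SN 𝒜 hF (D := D) hx hxM
  set N := M * (d + 1) * D with hN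
  have hN1 : 1 ≤ N := by
    have := Nat.mul_le_mul (Nat.mul_le_mul hM1 (Nat.le_add_left 1 d)) hD1
    simpa [hN] using this
  have h1 : (((D : ℝ) + 1)) ^ (d + 1) ≤ ∑ n ∈ Finset.range (N + 1), ((finrank k (𝒜 n) : ℝ)) := by
    have := hcard
    have hcast : (((D + 1) ^ (d + 1) : ℕ) : ℝ) ≤
        ((∑ n ∈ Finset.range (N + 1), finrank k (𝒜 n) : ℕ) : ℝ) := by exact_mod_cast this
    push_cast at hcast
    exact hcast
  have h2 := hPS N hN1
  -- arithmetic contradiction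
  have hDpos : (0 : ℝ) < D := by exact_mod_cast hD1
  have hDd : (0 : ℝ) < (D : ℝ) ^ d := by positivity
  have hNcast : ((N : ℝ)) = ((M * (d + 1) : ℕ) : ℝ) * D := by push_cast [hN]; ring
  have h3 : C * (N : ℝ) ^ d = C * ((M * (d + 1) : ℕ) : ℝ) ^ d * (D : ℝ) ^ d := by
    rw [hNcast, mul_pow]; ring
  have h4 : ((D : ℝ) + 1) * (D : ℝ) ^ d ≤ ((D : ℝ) + 1) ^ (d + 1) := by
    rw [pow_succ']
    refine mul_le_mul_of_nonneg_left (pow_le_pow_left₀ hDpos.le (by linarith) d) (by positivity)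
  have h5 : C * ((M * (d + 1) : ℕ) : ℝ) ^ d < (D : ℝ) + 1 := by
    calc C * ((M * (d + 1) : ℕ) : ℝ) ^ d < D0 := hD0
      _ ≤ (D : ℝ) := hDD0
      _ ≤ (D : ℝ) + 1 := by linarith
  have hCM : 0 ≤ C * ((M * (d + 1) : ℕ) : ℝ) ^ d := by positivity
  nlinarith [h1, h2, h3, h4, h5, hDd]

end

lemma HSBound.partial_sum {F : ℕ → ℕ} {d : ℕ} (h : HSBound F d) :
    ∃ C : ℝ, 0 < C ∧ ∀ N : ℕ, 1 ≤ N →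
      (∑ n ∈ Finset.range (N + 1), (F n : ℝ)) ≤ C * (N : ℝ) ^ d := by
  obtain ⟨C, hC, hb⟩ := h
  refine ⟨C * 2 ^ (d + 1), by positivity, fun N hN => ?_⟩
  have hN0 : (0 : ℝ) < N := by exact_mod_cast hN
  have hN1 : (1 : ℝ) ≤ N := by exact_mod_cast hN
  have h2N : (0 : ℝ) < 2 * N := by positivity
  set t : ℝ := 1 - 1 / (2 * N) with ht
  have hinv : 1 / (2 * (N : ℝ)) ≤ 1 / 2 := by
    apply one_div_le_one_div_of_le (by norm_num)
    linarith
  have ht0 : 0 < t := by rw [ht]; nlinarith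
  have ht1 : t < 1 := by
    rw [ht]; have : 0 < 1 / (2 * (N : ℝ)) := by positivity
    linarith
  obtain ⟨hsum, hle⟩ := hb t ⟨ht0, ht1⟩
  have htN : (1 : ℝ) / 2 ≤ t ^ N := by
    have h1 := one_add_mul_le_pow (a := -(1 / (2 * (N : ℝ)))) (by nlinarith) N
    have h2 : 1 + (N : ℝ) * -(1 / (2 * N)) = 1 / 2 := by field_simp; ring
    rw [h2] at h1
    simpa [ht, sub_eq_add_neg] using h1
  have key1 : (∑ n ∈ Finset.range (N + 1), (F n : ℝ)) * t ^ N ≤ ∑' n, (F n : ℝ) * t ^ n := by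
    rw [Finset.sum_mul]
    refine le_trans (Finset.sum_le_sum fun n hn => ?_)
      (Summable.sum_le_tsum _ (fun n _ => by positivity) hsum)
    exact mul_le_mul_of_nonneg_left
      (pow_le_pow_of_le_one ht0.le ht1.le (Nat.lt_succ_iff.mp (Finset.mem_range.mp hn)))
      (by positivity)
  have h1t : 1 - t = 1 / (2 * N) := by rw [ht]; ring
  have hpow : (0 : ℝ) < (2 * (N : ℝ)) ^ d := by positivity
  have key2 : ∑' n, (F n : ℝ) * t ^ n ≤ C * (2 * N) ^ d := by
    rw [h1t] at hle
    rw [div_pow, one_pow] at hle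
    rw [div_mul_eq_mul_div, div_le_iff₀ hpow, one_mul] at hle
    linarith [hle]
  have hS : 0 ≤ ∑ n ∈ Finset.range (N + 1), (F n : ℝ) :=
    Finset.sum_nonneg fun n _ => by positivity
  have : (∑ n ∈ Finset.range (N + 1), (F n : ℝ)) * (1 / 2) ≤ C * (2 * N) ^ d := by
    calc (∑ n ∈ Finset.range (N + 1), (F n : ℝ)) * (1 / 2)
        ≤ (∑ n ∈ Finset.range (N + 1), (F n : ℝ)) * t ^ N :=
          mul_le_mul_of_nonneg_left htN hS
      _ ≤ _ := key1.trans key2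
  have hrw : C * (2 * (N : ℝ)) ^ d = C * 2 ^ d * (N : ℝ) ^ d := by rw [mul_pow]; ring
  rw [hrw] at this
  have h2d : (0:ℝ) < (2:ℝ) ^ d := by positivity
  calc (∑ n ∈ Finset.range (N + 1), (F n : ℝ))
      ≤ 2 * (C * 2 ^ d * (N : ℝ) ^ d) := by linarith
    _ = C * 2 ^ (d + 1) * (N : ℝ) ^ d := by rw [pow_succ]; ring

end Aux

/-- for a Hilbert–Serre domain `R`, the transcendence degree of `R` over
`k` is at most the Hilbert–Serre dimension `d(R)`. -/
theorem trdeg_le_hsDim {k R : Type*} [Field k] [CommRing R] [IsDomain R] [Algebra k R]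
    (𝒜 : ℕ → Submodule k R) [GradedAlgebra 𝒜] (h0 : 𝒜 0 = 1)
    (hHS : IsHilbertSerre 𝒜) :
    trdeg k R ≤ (hsDim 𝒜 : Cardinal) := by
  classical
  obtain ⟨hF, d0, hd0⟩ := hHS
  have hb : HSBound (fun n => Module.finrank k (𝒜 n)) (hsDim 𝒜) :=
    Nat.sInf_mem (⟨d0, hd0⟩ : Set.Nonempty {d | HSBound (fun n => Module.finrank k (𝒜 n)) d})
  set d := hsDim 𝒜 with hd
  have hP := hb.partial_sum
  rw [trdeg]
  refine ciSup_le' ?_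
  rintro ⟨s, hs⟩
  by_contra hlt
  push_neg at hlt
  have h2 : ((d : Cardinal) + 1) ≤ Cardinal.mk s :=
    le_trans (Cardinal.add_one_le_succ _) (Order.succ_le_of_lt hlt)
  have h1 : Cardinal.mk (ULift (Fin (d + 1))) ≤ Cardinal.mk s := by
    simpa using h2
  obtain ⟨f⟩ := (Cardinal.le_def _ _).mp h1
  have hinjf : Function.Injective (fun i : Fin (d + 1) => f ⟨i⟩) :=
    fun a b hab => by simpa using congrArg ULift.down (f.injective hab)
  have hx : AlgebraicIndependent k (((↑) : s → R) ∘ fun i : Fin (d + 1) => f ⟨i⟩) :=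
    hs.comp _ hinjf
  exact not_indep 𝒜 hF hP _ hx
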